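/- arXiv:1807.11183 — 3 statements merged into one kernel-verified Lean document; each statement's English description precedes it below -/
import Mathlib

section
/- Let n ≥ 1 and let S = (a_1, a_2, ..., a_n) be an n-tuple of integers with 1 ≤ a_1 ≤ a_2 ≤ ... ≤ a_n ≤ 2^(n-1) and Σ_{i=1}^n a_i = 2^n − 1. Then S is the signature of a spanning tree of the n-cube Q_n if and only if Σ_{j=1}^k a_j ≥ 2^k − 1 for all k with 1 ≤ k ≤ n. -/
open SimpleGraph

/-- The `n`-cube: vertices are the subsets of `[n]` (modelled as `Finset (Fin n)`),
with an edge between `X` and `Y` iff their symmetric difference is a singleton. -/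
def cube (n : ℕ) : SimpleGraph (Finset (Fin n)) where
  Adj X Y := (symmDiff X Y).card = 1
  symm := by
    constructor
    intro X Y h
    rwa [symmDiff_comm]
  loopless := by
    constructor
    intro X h
    simp [symmDiff_self, Finset.bot_eq_empty] at h

/-- `T` is a spanning tree of `G` (both graphs on the same vertex set). -/
def IsSpanningTreeOf {V : Type*} (T G : SimpleGraph V) : Prop :=
  T ≤ G ∧ T.IsTree

/-- The edge `e` of the `n`-cube is in direction `i`. -/
def edgeInDir {n : ℕ} (i : Fin n) (e : Sym2 (Finset (Fin n))) : Prop :=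
  ∃ X : Finset (Fin n), e = s(X, symmDiff X {i})

/-- The number of edges of `T` in direction `i`. -/
noncomputable def dirCount {n : ℕ} (T : SimpleGraph (Finset (Fin n))) (i : Fin n) : ℕ :=
  {e | e ∈ T.edgeSet ∧ edgeInDir i e}.ncard

/-- `a` is the signature of the tree `T`. -/
def HasSig {n : ℕ} (T : SimpleGraph (Finset (Fin n))) (a : Fin n → ℕ) : Prop :=
  ∀ i, dirCount T i = a i

/-- `a` is a signature of `Q_n`, i.e. the signature of some spanning tree of the `n`-cube. -/
def IsSignature (n : ℕ) (a : Fin n → ℕ) : Prop :=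
  ∃ T, IsSpanningTreeOf T (cube n) ∧ HasSig T a

/-- A section of the set of nonempty subsets of `[n]`. -/
def IsSection {n : ℕ} (ψ : Finset (Fin n) → Fin n) : Prop :=
  ∀ X : Finset (Fin n), X.Nonempty → ψ X ∈ X

/-- The number of nonempty subsets on which the section `ψ` takes the value `i`. -/
noncomputable def secCount {n : ℕ} (ψ : Finset (Fin n) → Fin n) (i : Fin n) : ℕ :=
  {X : Finset (Fin n) | X.Nonempty ∧ ψ X = i}.ncard

/-- The tuple `a` reduces over `R` : `Σ_{i ∈ R} a i = 2^|R| - 1`. -/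
def ReducesOver {n : ℕ} (a : Fin n → ℕ) (R : Finset (Fin n)) : Prop :=
  ∑ i ∈ R, a i = 2 ^ R.card - 1

/-- `a` is reducible: it reduces over some proper nonempty subset of `[n]`. -/
def IsReducibleSig {n : ℕ} (a : Fin n → ℕ) : Prop :=
  ∃ R : Finset (Fin n), R.Nonempty ∧ R ≠ Finset.univ ∧ ReducesOver a R

/-- `a` is irreducible. -/
def IsIrreducibleSig {n : ℕ} (a : Fin n → ℕ) : Prop := ¬ IsReducibleSig a

/-- `T` is upright: every vertex `X` is at distance `|X|` in `T` from the root `∅`. -/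
def IsUpright {n : ℕ} (T : SimpleGraph (Finset (Fin n))) : Prop :=
  ∀ X : Finset (Fin n), T.dist X ∅ = X.card

/-- `ψ` is the section associated to the upright tree `T`: for each nonempty `X`,
`ψ X ∈ X` and `X - {ψ X}` is the next vertex after `X` on the path in `T` from `X` to `∅`. -/
def IsTreeSection {n : ℕ} (T : SimpleGraph (Finset (Fin n))) (ψ : Finset (Fin n) → Fin n) : Prop :=
  ∀ X : Finset (Fin n), X.Nonempty → ψ X ∈ X ∧ T.Adj X (X.erase (ψ X))

/-- The minimum of `Σ_{i ∈ K} a i` over the sets `K` of `k` directions. -/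
noncomputable def minSum {n : ℕ} (a : Fin n → ℕ) (k : ℕ) : ℕ :=
  sInf {m : ℕ | ∃ K : Finset (Fin n), K.card = k ∧ ∑ i ∈ K, a i = m}

/-- The excess of `a` at `k`. -/
noncomputable def excess {n : ℕ} (a : Fin n → ℕ) (k : ℕ) : ℤ :=
  (minSum a k : ℤ) - (2 ^ k - 1)

/-- The result of sliding the edge `e` in direction `i`. -/
def slideEdge {n : ℕ} (i : Fin n) (e : Sym2 (Finset (Fin n))) : Sym2 (Finset (Fin n)) :=
  Sym2.map (fun X => symmDiff X {i}) e

/-- The edge `e` of the spanning tree `T` of `Q_n` is `i`-slidable. -/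
def Slidable (n : ℕ) (T : SimpleGraph (Finset (Fin n))) (i : Fin n)
    (e : Sym2 (Finset (Fin n))) : Prop :=
  e ∈ T.edgeSet ∧
    IsSpanningTreeOf (SimpleGraph.fromEdgeSet ((T.edgeSet \ {e}) ∪ {slideEdge i e})) (cube n)

/-- The edge set `E` is (the edge set of) a spanning tree of the subgraph of the
`n`-cube induced on the vertex set `s`. -/
def IsSpanningTreeOn (n : ℕ) (s : Set (Finset (Fin n))) (E : Set (Sym2 (Finset (Fin n)))) : Prop :=
  E ⊆ (cube n).edgeSet ∧ (∀ e ∈ E, ∀ v ∈ e, v ∈ s) ∧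
    ((SimpleGraph.fromEdgeSet E).induce s).IsTree

/-- The edges of `T` with both endpoints in `s`. -/
def edgesWithin {n : ℕ} (s : Set (Finset (Fin n))) (T : SimpleGraph (Finset (Fin n))) :
    Set (Sym2 (Finset (Fin n))) :=
  {e | e ∈ T.edgeSet ∧ ∀ v ∈ e, v ∈ s}

/-- The edge `e` of the tree with edge set `E`, spanning the subgraph of the `n`-cube
induced on `s`, is `i`-slidable. -/
def SlidableOn (n : ℕ) (s : Set (Finset (Fin n))) (E : Set (Sym2 (Finset (Fin n))))
    (i : Fin n) (e : Sym2 (Finset (Fin n))) : Prop :=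
  e ∈ E ∧ IsSpanningTreeOn n s ((E \ {e}) ∪ {slideEdge i e})

/-- The number of edges of `T` in direction `i` with both endpoints in `s`. -/
noncomputable def dirCountOn {n : ℕ} (s : Set (Finset (Fin n)))
    (T : SimpleGraph (Finset (Fin n))) (i : Fin n) : ℕ :=
  {e | e ∈ T.edgeSet ∧ edgeInDir i e ∧ ∀ v ∈ e, v ∈ s}.ncard

/-- `T'` is a spanning tree of the `n`-cube obtained from the spanning tree `T` by a
single edge slide. -/
def SlideStep (n : ℕ) (T T' : SimpleGraph (Finset (Fin n))) : Prop :=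
  IsSpanningTreeOf T (cube n) ∧ IsSpanningTreeOf T' (cube n) ∧
    ∃ (i : Fin n) (e : Sym2 (Finset (Fin n))), e ∈ T.edgeSet ∧
      T' = SimpleGraph.fromEdgeSet ((T.edgeSet \ {e}) ∪ {slideEdge i e})

/-- The trees `T` and `T'` are related by a single edge slide. -/
def SlideAdj (n : ℕ) (T T' : SimpleGraph (Finset (Fin n))) : Prop :=
  T ≠ T' ∧ ∃ (i : Fin n) (e : Sym2 (Finset (Fin n))),
    (e ∈ T.edgeSet ∧ T' = SimpleGraph.fromEdgeSet ((T.edgeSet \ {e}) ∪ {slideEdge i e})) ∨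
    (e ∈ T'.edgeSet ∧ T = SimpleGraph.fromEdgeSet ((T'.edgeSet \ {e}) ∪ {slideEdge i e}))

/-- The spanning trees of the `n`-cube. -/
def SpanningTrees (n : ℕ) := {T : SimpleGraph (Finset (Fin n)) // IsSpanningTreeOf T (cube n)}

/-- The edge slide graph `E(n)` of the `n`-cube. -/
def eslide (n : ℕ) : SimpleGraph (SpanningTrees n) where
  Adj T T' := SlideAdj n T.1 T'.1
  symm := by
    constructor
    rintro T T' ⟨hne, i, e, h⟩
    exact ⟨hne.symm, i, e, h.symm⟩
  loopless := by
    constructor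
    rintro T ⟨hne, -⟩
    exact hne rfl

/-- The projection `π_R(T)` of `T` to `Q_R`: a graph on the subsets of `R`, with `A`
adjacent to `B` iff some edge of `T` projects to `{A, B}`. -/
def projTree (n : ℕ) (R : Finset (Fin n)) (T : SimpleGraph (Finset (Fin n))) :
    SimpleGraph ↥{W : Finset (Fin n) | W ⊆ R} where
  Adj A B := A.1 ≠ B.1 ∧ ∃ U V : Finset (Fin n), T.Adj U V ∧ U ∩ R = A.1 ∧ V ∩ R = B.1
  symm := by
    constructor
    rintro A B ⟨hne, U, V, hUV, hU, hV⟩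
    exact ⟨hne.symm, V, U, hUV.symm, hV, hU⟩
  loopless := by
    constructor
    rintro A ⟨hne, -⟩
    exact hne rfl

/-- The projected edge set `π_R(T)`: images under `π_R` of the edges of `T` in
directions belonging to `R`. -/
def projEdges {n : ℕ} (R : Finset (Fin n)) (T : SimpleGraph (Finset (Fin n))) :
    Set (Sym2 (Finset (Fin n))) :=
  {f | ∃ e ∈ T.edgeSet, (∃ i ∈ R, edgeInDir i e) ∧ f = Sym2.map (· ∩ R) e}

/-- The decomposition `T ↦ (F_T, (T(R,X))_{X ⊆ R})` of a tree reducing over `R`. -/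
def decompose (n : ℕ) (R : Finset (Fin n)) (T : SimpleGraph (Finset (Fin n))) :
    Set (Sym2 (Finset (Fin n))) ×
      ((X : Finset (Fin n)) → X ⊆ R → SimpleGraph ↥{W : Finset (Fin n) | W ∩ R = X}) :=
  ⟨{e | e ∈ T.edgeSet ∧ ∃ i ∈ R, edgeInDir i e},
   fun X _ => T.induce {W : Finset (Fin n) | W ∩ R = X}⟩

/-- `s` is the least index such that `ε_k(a) = 0` for all `s ≤ k ≤ n`; i.e. the
entries of (an ordered) `a` with index `≤ s` form the unsaturated part of `a`. -/
def UnsatIndex (n : ℕ) (a : Fin n → ℕ) (s : ℕ) : Prop :=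
  (∀ k, s ≤ k → k ≤ n → excess a k = 0) ∧
    ∀ s' < s, ¬ (∀ k, s' ≤ k → k ≤ n → excess a k = 0)

/-- The restriction of `a` to its first `s` entries is reducible (as a tuple of length `s`). -/
def ReducibleBelow {n : ℕ} (a : Fin n → ℕ) (s : ℕ) : Prop :=
  ∃ R : Finset (Fin n), R.Nonempty ∧ (∀ i ∈ R, (i : ℕ) < s) ∧ R.card < s ∧
    ∑ i ∈ R, a i = 2 ^ R.card - 1

/-- `a` is strictly reducible: it is reducible and its unsaturated part is reducible. -/
def StrictlyReducible (n : ℕ) (a : Fin n → ℕ) : Prop :=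
  IsReducibleSig a ∧
    ∃ (σ : Equiv.Perm (Fin n)) (s : ℕ), Monotone (a ∘ σ) ∧
      UnsatIndex n (a ∘ σ) s ∧ ReducibleBelow (a ∘ σ) s

/-! ### Auxiliary development -/

section Aux

open Finset in
lemma mySymmDiff_singleton_of_mem {n : ℕ} {X : Finset (Fin n)} {i : Fin n} (h : i ∈ X) :
    symmDiff X {i} = X.erase i := by
  ext x
  simp only [Finset.mem_symmDiff, Finset.mem_singleton, Finset.mem_erase]
  constructor
  · rintro (⟨hx, hne⟩ | ⟨rfl, hx⟩)
    · exact ⟨hne, hx⟩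
    · exact absurd h hx
  · rintro ⟨hne, hx⟩
    exact Or.inl ⟨hx, hne⟩

lemma mySymmDiff_singleton_of_not_mem {n : ℕ} {X : Finset (Fin n)} {i : Fin n} (h : i ∉ X) :
    symmDiff X {i} = insert i X := by
  ext x
  simp only [Finset.mem_symmDiff, Finset.mem_singleton, Finset.mem_insert]
  constructor
  · rintro (⟨hx, hne⟩ | ⟨rfl, hx⟩)
    · exact Or.inr hx
    · exact Or.inl rfl
  · rintro (rfl | hx)
    · exact Or.inr ⟨rfl, h⟩
    · exact Or.inl ⟨hx, fun he => h (he ▸ hx)⟩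

lemma mySymmDiff_erase_of_mem {n : ℕ} {X : Finset (Fin n)} {i : Fin n} (h : i ∈ X) :
    symmDiff X (X.erase i) = {i} := by
  calc symmDiff X (X.erase i) = symmDiff X (symmDiff X {i}) := by
        rw [mySymmDiff_singleton_of_mem h]
  _ = {i} := symmDiff_symmDiff_cancel_left X {i}

lemma cube_adj_erase {n : ℕ} {X : Finset (Fin n)} {i : Fin n} (h : i ∈ X) :
    (cube n).Adj X (X.erase i) := by
  show (symmDiff X (X.erase i)).card = 1
  rw [mySymmDiff_erase_of_mem h, Finset.card_singleton]

lemma edgeInDir_iff_of_mem {n : ℕ} {X : Finset (Fin n)} {j : Fin n} (hj : j ∈ X) (i : Fin n) :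
    edgeInDir i s(X, X.erase j) ↔ i = j := by
  have hX1 : 1 ≤ X.card := Finset.card_pos.mpr ⟨j, hj⟩
  constructor
  · rintro ⟨Z, hZ⟩
    rw [Sym2.eq_iff] at hZ
    rcases hZ with ⟨hZ1, hZ2⟩ | ⟨hZ1, hZ2⟩
    · subst hZ1
      by_cases hiX : i ∈ X
      · rw [mySymmDiff_singleton_of_mem hiX] at hZ2
        exact (Finset.erase_inj X hiX).mp hZ2.symm
      · rw [mySymmDiff_singleton_of_not_mem hiX] at hZ2
        exfalso
        have h1 := congrArg Finset.card hZ2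
        rw [Finset.card_insert_of_notMem hiX, Finset.card_erase_of_mem hj] at h1
        omega
    · -- X = symmDiff Z {i}, Z = X.erase j
      subst hZ2
      by_cases hiZ : i ∈ X.erase j
      · rw [mySymmDiff_singleton_of_mem hiZ] at hZ1
        exfalso
        have h1 := congrArg Finset.card hZ1
        rw [Finset.card_erase_of_mem hiZ, Finset.card_erase_of_mem hj] at h1
        omega
      · rw [mySymmDiff_singleton_of_not_mem hiZ] at hZ1
        have hjmem : j ∈ insert i (X.erase j) := hZ1 ▸ hj
        rcases Finset.mem_insert.mp hjmem with h' | h'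
        · exact h'.symm
        · exact absurd h' (Finset.notMem_erase j X)
  · rintro rfl
    exact ⟨X, by rw [mySymmDiff_singleton_of_mem hj]⟩

/-- The upright tree associated to a section `ψ`. -/
def secTree {n : ℕ} (ψ : Finset (Fin n) → Fin n) : SimpleGraph (Finset (Fin n)) where
  Adj X Y := (ψ X ∈ X ∧ Y = X.erase (ψ X)) ∨ (ψ Y ∈ Y ∧ X = Y.erase (ψ Y))
  symm := ⟨fun X Y h => h.symm⟩
  loopless := by
    constructor
    rintro X (⟨h1, h2⟩ | ⟨h1, h2⟩) <;>
    · have hne := Finset.notMem_erase (ψ X) X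
      rw [← h2] at hne
      exact hne h1

lemma secTree_le_cube {n : ℕ} (ψ : Finset (Fin n) → Fin n) : secTree ψ ≤ cube n := by
  rintro X Y (⟨h1, rfl⟩ | ⟨h1, rfl⟩)
  · exact cube_adj_erase h1
  · exact (cube_adj_erase h1).symm

lemma secTree_edge_iff {n : ℕ} {ψ : Finset (Fin n) → Fin n} {e : Sym2 (Finset (Fin n))} :
    e ∈ (secTree ψ).edgeSet ↔ ∃ X, ψ X ∈ X ∧ e = s(X, X.erase (ψ X)) := by
  induction e using Sym2.ind with
  | _ U V =>
    rw [SimpleGraph.mem_edgeSet]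
    constructor
    · rintro (⟨h1, rfl⟩ | ⟨h1, rfl⟩)
      · exact ⟨U, h1, rfl⟩
      · exact ⟨V, h1, Sym2.eq_swap⟩
    · rintro ⟨X, h1, he⟩
      rw [Sym2.eq_iff] at he
      rcases he with ⟨rfl, rfl⟩ | ⟨rfl, rfl⟩
      · exact Or.inl ⟨h1, rfl⟩
      · exact Or.inr ⟨h1, rfl⟩

lemma secTree_adj_card {n : ℕ} {ψ : Finset (Fin n) → Fin n} {X Y : Finset (Fin n)}
    (h : (secTree ψ).Adj X Y) : Y.card + 1 = X.card ∨ X.card + 1 = Y.card := by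
  rcases h with ⟨h1, rfl⟩ | ⟨h1, rfl⟩
  · left
    rw [Finset.card_erase_of_mem h1]
    have : 1 ≤ X.card := Finset.card_pos.mpr ⟨_, h1⟩
    omega
  · right
    rw [Finset.card_erase_of_mem h1]
    have : 1 ≤ Y.card := Finset.card_pos.mpr ⟨_, h1⟩
    omega

lemma secTree_connected {n : ℕ} (ψ : Finset (Fin n) → Fin n)
    (hψ : ∀ X : Finset (Fin n), X.Nonempty → ψ X ∈ X) : (secTree ψ).Connected := by
  have key : ∀ (m : ℕ) (X : Finset (Fin n)), X.card = m → (secTree ψ).Reachable X ∅ := by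
    intro m
    induction m with
    | zero =>
      intro X hX
      rw [Finset.card_eq_zero] at hX
      subst hX
      exact SimpleGraph.Reachable.refl _
    | succ m ih =>
      intro X hX
      have hne : X.Nonempty := Finset.card_pos.mp (by omega)
      have hmem := hψ X hne
      have hadj : (secTree ψ).Adj X (X.erase (ψ X)) := Or.inl ⟨hmem, rfl⟩
      refine hadj.reachable.trans (ih _ ?_)
      rw [Finset.card_erase_of_mem hmem, hX]
      omega
  rw [SimpleGraph.connected_iff]
  exact ⟨fun X Y => (key _ X rfl).trans (key _ Y rfl).symm, ⟨∅⟩⟩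

lemma secTree_cycle_aux {n : ℕ} {ψ : Finset (Fin n) → Fin n} {X : Finset (Fin n)}
    (d : (secTree ψ).Walk X X) (hd : d.IsCycle)
    (hmax : ∀ W ∈ d.support, W.card ≤ X.card) : False := by
  cases d with
  | nil => exact hd.ne_nil rfl
  | @cons _ Y _ h q =>
    -- h : Adj X Y, q : Walk Y X
    have hY : ψ X ∈ X ∧ Y = X.erase (ψ X) := by
      have hcopy := h
      rcases hcopy with ⟨h1, h2⟩ | ⟨h1, h2⟩
      · exact ⟨h1, h2⟩
      · exfalso
        have hYs : Y ∈ (SimpleGraph.Walk.cons h q).support := by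
          rw [SimpleGraph.Walk.support_cons]
          exact List.mem_cons_of_mem _ q.start_mem_support
        have hle := hmax Y hYs
        have h1' : 1 ≤ Y.card := Finset.card_pos.mpr ⟨_, h1⟩
        have h2' := congrArg Finset.card h2
        rw [Finset.card_erase_of_mem h1] at h2'
        omega
    obtain ⟨Z, q', h', heq⟩ := SimpleGraph.Walk.exists_cons_eq_concat h q
    have hZ : Z = Y := by
      have hcopy := h'
      rcases hcopy with ⟨h1, h2⟩ | ⟨h1, h2⟩
      · exfalso
        have hZs : Z ∈ (SimpleGraph.Walk.cons h q).support := by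
          rw [heq, SimpleGraph.Walk.support_concat]
          exact List.mem_append_left _ q'.end_mem_support
        have hle := hmax Z hZs
        have h1' : 1 ≤ Z.card := Finset.card_pos.mpr ⟨_, h1⟩
        have h2' := congrArg Finset.card h2
        rw [Finset.card_erase_of_mem h1] at h2'
        omega
      · rw [h2, hY.2]
    have hcycle := (SimpleGraph.Walk.cons_isCycle_iff q h).mp hd
    have hedges : s(X,Y) :: q.edges = q'.edges ++ [s(Z,X)] := by
      have h3 := congrArg SimpleGraph.Walk.edges heq
      rwa [SimpleGraph.Walk.edges_cons, SimpleGraph.Walk.edges_concat,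
        List.concat_eq_append] at h3
    have hswap : s(Z, X) = s(X, Y) := by rw [hZ, Sym2.eq_swap]
    rcases hq' : q'.edges with _ | ⟨e0, l⟩
    · rw [hq'] at hedges
      simp only [List.nil_append, List.cons.injEq] at hedges
      have h3 := hd.three_le_length
      have h4 : q.edges.length = 0 := by rw [hedges.2]; rfl
      rw [SimpleGraph.Walk.length_edges] at h4
      simp only [SimpleGraph.Walk.length_cons] at h3
      omega
    · rw [hq', List.cons_append, List.cons_eq_cons] at hedges
      have hmem : s(X, Y) ∈ q.edges := by
        rw [hedges.2, ← hswap]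
        exact List.mem_append_right _ (List.mem_singleton_self _)
      exact hcycle.2 hmem

lemma secTree_acyclic {n : ℕ} (ψ : Finset (Fin n) → Fin n) : (secTree ψ).IsAcyclic := by
  intro v c hc
  obtain ⟨X, hXmem, hXmax⟩ :=
    Finset.exists_max_image c.support.toFinset Finset.card ⟨v, by simp⟩
  rw [List.mem_toFinset] at hXmem
  refine secTree_cycle_aux (c.rotate X hXmem) (hc.rotate hXmem) ?_
  intro W hW
  rw [SimpleGraph.Walk.support_eq_cons, List.mem_cons] at hW
  rcases hW with rfl | hW
  · exact le_rfl
  · have hperm := SimpleGraph.Walk.support_rotate c X hXmem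
    have hW' : W ∈ c.support.tail := hperm.mem_iff.mp hW
    have : W ∈ c.support := by
      rw [SimpleGraph.Walk.support_eq_cons c]
      exact List.mem_cons_of_mem _ hW'
    exact hXmax W (List.mem_toFinset.mpr this)

lemma secTree_isTree {n : ℕ} (ψ : Finset (Fin n) → Fin n)
    (hψ : ∀ X : Finset (Fin n), X.Nonempty → ψ X ∈ X) : (secTree ψ).IsTree :=
  ⟨secTree_connected ψ hψ, secTree_acyclic ψ⟩

lemma secTree_dirCount {n : ℕ} (ψ : Finset (Fin n) → Fin n)
    (hψ : ∀ X : Finset (Fin n), X.Nonempty → ψ X ∈ X) (i : Fin n) :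
    dirCount (secTree ψ) i = {X : Finset (Fin n) | X.Nonempty ∧ ψ X = i}.ncard := by
  have himg : {e | e ∈ (secTree ψ).edgeSet ∧ edgeInDir i e}
      = (fun X => s(X, X.erase (ψ X))) '' {X | X.Nonempty ∧ ψ X = i} := by
    ext e
    constructor
    · rintro ⟨he, hdir⟩
      rw [secTree_edge_iff] at he
      obtain ⟨X, h1, rfl⟩ := he
      have h2 : i = ψ X := (edgeInDir_iff_of_mem h1 i).mp hdir
      exact ⟨X, ⟨⟨_, h1⟩, h2.symm⟩, rfl⟩
    · rintro ⟨X, ⟨hne, rfl⟩, rfl⟩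
      have h1 : ψ X ∈ X := hψ X hne
      exact ⟨secTree_edge_iff.mpr ⟨X, h1, rfl⟩, (edgeInDir_iff_of_mem h1 _).mpr rfl⟩
  have hinj : Set.InjOn (fun X => s(X, X.erase (ψ X))) {X | X.Nonempty ∧ ψ X = i} := by
    rintro U ⟨hU, -⟩ V ⟨hV, -⟩ hUV
    simp only [Sym2.eq_iff] at hUV
    rcases hUV with ⟨h1, -⟩ | ⟨h1, h2⟩
    · exact h1
    · exfalso
      have hU1 : 1 ≤ U.card := Finset.card_pos.mpr hU
      have hV1 : 1 ≤ V.card := Finset.card_pos.mpr hV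
      have c1 := congrArg Finset.card h1
      have c2 := congrArg Finset.card h2
      rw [Finset.card_erase_of_mem (hψ V hV)] at c1
      rw [Finset.card_erase_of_mem (hψ U hU)] at c2
      omega
  unfold dirCount
  rw [himg, Set.ncard_image_of_injOn hinj]

lemma isSignature_of_section {n : ℕ} {a : Fin n → ℕ} (ψ : Finset (Fin n) → Fin n)
    (hψ : ∀ X : Finset (Fin n), X.Nonempty → ψ X ∈ X)
    (hcount : ∀ i, {X : Finset (Fin n) | X.Nonempty ∧ ψ X = i}.ncard = a i) :
    IsSignature n a :=
  ⟨secTree ψ, ⟨secTree_le_cube ψ, secTree_isTree ψ hψ⟩,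
    fun i => by rw [secTree_dirCount ψ hψ, hcount]⟩

lemma exists_good_section {n : ℕ} (hn : 1 ≤ n) {a : Fin n → ℕ}
    (hK : ∀ K : Finset (Fin n), 2 ^ K.card - 1 ≤ ∑ i ∈ K, a i)
    (hsum : ∑ i, a i = 2 ^ n - 1) :
    ∃ ψ : Finset (Fin n) → Fin n, (∀ X : Finset (Fin n), X.Nonempty → ψ X ∈ X) ∧
      ∀ i, {X : Finset (Fin n) | X.Nonempty ∧ ψ X = i}.ncard = a i := by
  classical
  set t : {X : Finset (Fin n) // X.Nonempty} → Finset (Fin n × ℕ) :=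
    fun X => X.1.biUnion (fun i => (Finset.range (a i)).image (Prod.mk i)) with ht
  have hall : ∀ s : Finset {X : Finset (Fin n) // X.Nonempty}, s.card ≤ (s.biUnion t).card := by
    intro s
    set U : Finset (Fin n) := s.biUnion (fun X => X.1) with hU
    have h1 : s.biUnion t = U.biUnion (fun i => (Finset.range (a i)).image (Prod.mk i)) := by
      ext p
      simp only [Finset.mem_biUnion, ht, hU]
      constructor
      · rintro ⟨X, hX, i, hiX, hp⟩
        exact ⟨i, ⟨X, hX, hiX⟩, hp⟩
      · rintro ⟨i, ⟨X, hX, hiX⟩, hp⟩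
        exact ⟨X, hX, i, hiX, hp⟩
    have h2 : (U.biUnion (fun i => (Finset.range (a i)).image (Prod.mk i))).card
        = ∑ i ∈ U, a i := by
      rw [Finset.card_biUnion]
      · refine Finset.sum_congr rfl fun i _ => ?_
        rw [Finset.card_image_of_injective _ (fun x y h => (Prod.mk.injEq _ _ _ _ ▸ h).2 : Function.Injective (Prod.mk i)), Finset.card_range]
      · intro x hx y hy hxy
        rw [Function.onFun, Finset.disjoint_left]
        rintro p hp hp'
        simp only [Finset.mem_image, Finset.mem_range] at hp hp'
        obtain ⟨j, -, rfl⟩ := hp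
        obtain ⟨j', -, hj'⟩ := hp'
        exact hxy (congrArg Prod.fst hj').symm
    have h3 : s.card ≤ 2 ^ U.card - 1 := by
      have hmap : s.card ≤ (U.powerset.erase ∅).card := by
        refine Finset.card_le_card_of_injOn Subtype.val ?_ ?_
        · intro X hX
          rw [Finset.mem_coe, Finset.mem_erase, Finset.mem_powerset]
          exact ⟨X.2.ne_empty, Finset.subset_biUnion_of_mem (fun X => X.1) hX⟩
        · intro X _ Y _ h
          exact Subtype.ext h
      rwa [Finset.card_erase_of_mem (Finset.empty_mem_powerset U),
        Finset.card_powerset] at hmap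
    rw [h1, h2]
    exact h3.trans (hK U)
  obtain ⟨f, hfinj, hfm⟩ := (Finset.all_card_le_biUnion_card_iff_exists_injective t).mp hall
  have hf1 : ∀ (X : Finset (Fin n)) (h : X.Nonempty),
      (f ⟨X, h⟩).1 ∈ X ∧ (f ⟨X, h⟩).2 < a (f ⟨X, h⟩).1 := by
    intro X h
    have := hfm ⟨X, h⟩
    simp only [ht, Finset.mem_biUnion, Finset.mem_image, Finset.mem_range] at this
    obtain ⟨i, hi, j, hj, hp⟩ := this
    rw [← hp]
    exact ⟨hi, hj⟩
  set ψ : Finset (Fin n) → Fin n :=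
    fun X => if h : X.Nonempty then (f ⟨X, h⟩).1 else ⟨0, hn⟩ with hψdef
  have hψ : ∀ X : Finset (Fin n), X.Nonempty → ψ X ∈ X := by
    intro X hX
    rw [hψdef]
    simp only [dif_pos hX]
    exact (hf1 X hX).1
  refine ⟨ψ, hψ, ?_⟩
  set F : Finset (Finset (Fin n)) := Finset.univ.filter (fun X => X.Nonempty) with hF
  have hsets : ∀ i, {X : Finset (Fin n) | X.Nonempty ∧ ψ X = i}
      = ↑(F.filter (fun X => ψ X = i)) := by
    intro i
    ext X
    simp [hF]
  have hle : ∀ i, (F.filter (fun X => ψ X = i)).card ≤ a i := by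
    intro i
    have : (F.filter (fun X => ψ X = i)).card ≤ (Finset.range (a i)).card := by
      refine Finset.card_le_card_of_injOn
        (fun X => if h : X.Nonempty then (f ⟨X, h⟩).2 else 0) ?_ ?_
      · intro X hX
        rw [Finset.mem_coe, Finset.mem_filter, hF, Finset.mem_filter] at hX
        obtain ⟨⟨-, hne⟩, hψX⟩ := hX
        rw [hψdef] at hψX
        simp only [dif_pos hne] at hψX ⊢
        rw [Finset.mem_coe, Finset.mem_range]
        have := (hf1 X hne).2
        rwa [hψX] at this
      · intro X hX Y hY hXY
        rw [Finset.mem_coe, Finset.mem_filter, hF, Finset.mem_filter] at hX hY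
        obtain ⟨⟨-, hneX⟩, hψX⟩ := hX
        obtain ⟨⟨-, hneY⟩, hψY⟩ := hY
        rw [hψdef] at hψX hψY
        simp only [dif_pos hneX, dif_pos hneY] at hψX hψY hXY
        have : f ⟨X, hneX⟩ = f ⟨Y, hneY⟩ := by
          ext
          · rw [hψX, hψY]
          · exact hXY
        exact congrArg Subtype.val (hfinj this)
    rwa [Finset.card_range] at this
  have hcardF : F.card = 2 ^ n - 1 := by
    have : F = Finset.univ.erase ∅ := by
      ext X
      simp [hF, Finset.nonempty_iff_ne_empty]
    rw [this, Finset.card_erase_of_mem (Finset.mem_univ _), Finset.card_univ,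
      Fintype.card_finset, Fintype.card_fin]
  have hsum_fib : ∑ i, (F.filter (fun X => ψ X = i)).card = F.card :=
    (Finset.card_eq_sum_card_fiberwise (fun X _ => Finset.mem_univ (ψ X))).symm
  have heq := (Finset.sum_eq_sum_iff_of_le (fun i _ => hle i)).mp
    (by rw [hsum_fib, hcardF, hsum])
  intro i
  rw [hsets i, Set.ncard_coe_finset]
  exact heq i (Finset.mem_univ i)

lemma strictMono_le_val {k n : ℕ} {f : Fin k → Fin n} (hf : StrictMono f) (j : Fin k) :
    (j : ℕ) ≤ (f j : ℕ) := by
  have key : ∀ (m : ℕ) (hm : m < k), m ≤ (f ⟨m, hm⟩ : ℕ) := by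
    intro m
    induction m with
    | zero => intro hm; exact Nat.zero_le _
    | succ p ih =>
      intro hm
      have hp : p < k := by omega
      have h1 := ih hp
      have h2 : f ⟨p, hp⟩ < f ⟨p + 1, hm⟩ := hf (by simp [Fin.lt_def])
      rw [Fin.lt_def] at h2
      omega
  have := key j.1 j.2
  simpa using this

lemma filter_lt_eq_map {n k : ℕ} (hkn : k ≤ n) :
    Finset.univ.filter (fun i : Fin n => (i : ℕ) < k)
      = Finset.univ.map (Fin.castLEEmb hkn) := by
  ext i
  simp only [Finset.mem_filter, Finset.mem_univ, true_and, Finset.mem_map]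
  constructor
  · intro hik
    exact ⟨⟨(i : ℕ), hik⟩, Fin.ext rfl⟩
  · rintro ⟨j, rfl⟩
    exact j.2

lemma key_ineq {n : ℕ} {a : Fin n → ℕ} (hmono : Monotone a)
    (h : ∀ k, 1 ≤ k → k ≤ n →
      2 ^ k - 1 ≤ ∑ i ∈ Finset.univ.filter (fun i : Fin n => (i : ℕ) < k), a i)
    (K : Finset (Fin n)) : 2 ^ K.card - 1 ≤ ∑ i ∈ K, a i := by
  rcases Nat.eq_zero_or_pos K.card with h0 | hpos
  · simp [h0]
  have hkn : K.card ≤ n := by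
    have := Finset.card_le_univ K
    simpa using this
  refine (h K.card hpos hkn).trans ?_
  have hKmap : K = Finset.univ.map (K.orderEmbOfFin rfl).toEmbedding := by
    ext x
    simp only [Finset.mem_map, Finset.mem_univ, true_and, RelEmbedding.coe_toEmbedding]
    constructor
    · intro hx
      have hx' : x ∈ Set.range (K.orderEmbOfFin rfl) := by
        rw [Finset.range_orderEmbOfFin]
        exact hx
      obtain ⟨j, hj⟩ := hx'
      exact ⟨j, hj⟩
    · rintro ⟨j, rfl⟩
      exact Finset.orderEmbOfFin_mem K rfl j
  rw [filter_lt_eq_map hkn]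
  conv_rhs => rw [hKmap]
  rw [Finset.sum_map, Finset.sum_map]
  refine Finset.sum_le_sum fun j _ => hmono ?_
  rw [Fin.le_def]
  have h1 := strictMono_le_val (K.orderEmbOfFin rfl).strictMono j
  simpa using h1

lemma ncard_dir_union_le {n : ℕ} (T : SimpleGraph (Finset (Fin n))) (K : Finset (Fin n)) :
    {e | e ∈ T.edgeSet ∧ ∃ i ∈ K, edgeInDir i e}.ncard ≤ ∑ i ∈ K, dirCount T i := by
  classical
  induction K using Finset.induction_on with
  | empty => simp
  | @insert j K hj ih =>
    have hset : {e | e ∈ T.edgeSet ∧ ∃ i ∈ insert j K, edgeInDir i e}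
        = {e | e ∈ T.edgeSet ∧ edgeInDir j e}
          ∪ {e | e ∈ T.edgeSet ∧ ∃ i ∈ K, edgeInDir i e} := by
      ext e
      simp only [Set.mem_setOf_eq, Set.mem_union, Finset.mem_insert]
      constructor
      · rintro ⟨he, i, (rfl | hiK), hdir⟩
        · exact Or.inl ⟨he, hdir⟩
        · exact Or.inr ⟨he, i, hiK, hdir⟩
      · rintro (⟨he, hdir⟩ | ⟨he, i, hiK, hdir⟩)
        · exact ⟨he, j, Or.inl rfl, hdir⟩
        · exact ⟨he, i, Or.inr hiK, hdir⟩
    rw [hset, Finset.sum_insert hj]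
    exact (Set.ncard_union_le _ _).trans (Nat.add_le_add le_rfl ih)

lemma connected_card_le {V : Type*} [Fintype V] {G : SimpleGraph V} (hG : G.Connected) :
    Fintype.card V ≤ G.edgeSet.ncard + 1 := by
  classical
  obtain ⟨r⟩ := hG.nonempty
  have hstep : ∀ v : V, v ≠ r → ∃ u, G.Adj v u ∧ G.dist u r < G.dist v r := by
    intro v hv
    obtain ⟨p, hp⟩ := hG.exists_walk_length_eq_dist v r
    cases p with
    | nil => exact absurd rfl hv
    | @cons _ w _ h q =>
      refine ⟨w, h, ?_⟩
      have h1 : G.dist w r ≤ q.length := SimpleGraph.dist_le q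
      rw [SimpleGraph.Walk.length_cons] at hp
      omega
  choose u hadj hdist using hstep
  set g : V → Sym2 V := fun v => if h : v ≠ r then s(v, u v h) else s(r, r) with hg
  have himg : g '' {v | v ≠ r} ⊆ G.edgeSet := by
    rintro e ⟨v, hv, rfl⟩
    have hv' : v ≠ r := hv
    rw [hg]
    simp only [dif_pos hv']
    exact hadj v hv'
  have hinj : Set.InjOn g {v | v ≠ r} := by
    intro x hx y hy hxy
    have hx' : x ≠ r := hx
    have hy' : y ≠ r := hy
    rw [hg] at hxy
    simp only [dif_pos hx', dif_pos hy', Sym2.eq_iff] at hxy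
    rcases hxy with ⟨h1, -⟩ | ⟨h1, h2⟩
    · exact h1
    · exfalso
      have d1 := hdist x hx'
      have d2 := hdist y hy'
      rw [h2] at d1
      rw [← h1] at d2
      omega
  have h1 : {v : V | v ≠ r}.ncard ≤ G.edgeSet.ncard := by
    rw [← Set.ncard_image_of_injOn hinj]
    exact Set.ncard_le_ncard himg (Set.toFinite _)
  have h2 : {v : V | v ≠ r}.ncard + 1 = Fintype.card V := by
    have he : {v : V | v ≠ r} = Set.univ \ {r} := by
      ext x
      simp
    rw [he, Set.ncard_diff_singleton_add_one (Set.mem_univ r) (Set.toFinite _),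
      Set.ncard_univ, Nat.card_eq_fintype_card]
  omega

lemma projTree_reachable {n : ℕ} (K : Finset (Fin n)) (T : SimpleGraph (Finset (Fin n)))
    {U V : Finset (Fin n)} (p : T.Walk U V) :
    (projTree n K T).Reachable
      ⟨U ∩ K, Finset.inter_subset_right⟩ ⟨V ∩ K, Finset.inter_subset_right⟩ := by
  induction p with
  | nil => exact SimpleGraph.Reachable.refl _
  | @cons A B C h q ih =>
    by_cases hAB : A ∩ K = B ∩ K
    · have heq : (⟨A ∩ K, Finset.inter_subset_right⟩ : ↥{W : Finset (Fin n) | W ⊆ K})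
          = ⟨B ∩ K, Finset.inter_subset_right⟩ := Subtype.ext hAB
      rw [heq]
      exact ih
    · have hadj : (projTree n K T).Adj ⟨A ∩ K, Finset.inter_subset_right⟩
          ⟨B ∩ K, Finset.inter_subset_right⟩ := ⟨hAB, A, B, h, rfl, rfl⟩
      exact hadj.reachable.trans ih

lemma projTree_connected {n : ℕ} (K : Finset (Fin n)) {T : SimpleGraph (Finset (Fin n))}
    (hT : T.Connected) : (projTree n K T).Connected := by
  rw [SimpleGraph.connected_iff]
  constructor
  · rintro ⟨A, hA⟩ ⟨B, hB⟩
    obtain ⟨p⟩ := hT A B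
    have h := projTree_reachable K T p
    have hA' : A ∩ K = A := Finset.inter_eq_left.mpr hA
    have hB' : B ∩ K = B := Finset.inter_eq_left.mpr hB
    have e1 : (⟨A, hA⟩ : ↥{W : Finset (Fin n) | W ⊆ K})
        = ⟨A ∩ K, Finset.inter_subset_right⟩ := Subtype.ext hA'.symm
    have e2 : (⟨B, hB⟩ : ↥{W : Finset (Fin n) | W ⊆ K})
        = ⟨B ∩ K, Finset.inter_subset_right⟩ := Subtype.ext hB'.symm
    rw [e1, e2]
    exact h
  · exact ⟨⟨∅, Finset.empty_subset K⟩⟩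

lemma card_projVerts {n : ℕ} (K : Finset (Fin n)) :
    Nat.card ↥{W : Finset (Fin n) | W ⊆ K} = 2 ^ K.card := by
  have h1 : {W : Finset (Fin n) | W ⊆ K} = ↑K.powerset := by
    ext W
    simp [Finset.mem_powerset]
  rw [Nat.card_coe_set_eq, h1, Set.ncard_coe_finset, Finset.card_powerset]

lemma forward_ineq {n : ℕ} {a : Fin n → ℕ} {T : SimpleGraph (Finset (Fin n))}
    (hT : IsSpanningTreeOf T (cube n)) (hsig : HasSig T a)
    {k : ℕ} (hk1 : 1 ≤ k) (hkn : k ≤ n) :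
    2 ^ k - 1 ≤ ∑ i ∈ Finset.univ.filter (fun i : Fin n => (i : ℕ) < k), a i := by
  classical
  set K := Finset.univ.filter (fun i : Fin n => (i : ℕ) < k) with hK
  have hKcard : K.card = k := by
    rw [hK, filter_lt_eq_map hkn, Finset.card_map, Finset.card_univ, Fintype.card_fin]
  set EK := {e | e ∈ T.edgeSet ∧ ∃ i ∈ K, edgeInDir i e} with hEK
  have hTconn : T.Connected := hT.2.isConnected
  have hproj : ∀ e' ∈ (projTree n K T).edgeSet, ∃ e ∈ EK,
      Sym2.map (fun U => U ∩ K) e = Sym2.map Subtype.val e' := by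
    intro e' he'
    induction e' using Sym2.ind with
    | _ A B =>
      rw [SimpleGraph.mem_edgeSet] at he'
      obtain ⟨hne, U, V, hUV, hU, hV⟩ := he'
      have hcard : (symmDiff U V).card = 1 := hT.1 hUV
      obtain ⟨d, hd⟩ := Finset.card_eq_one.mp hcard
      have hdK : d ∈ K := by
        by_contra hdK
        apply hne
        rw [← hU, ← hV]
        ext x
        simp only [Finset.mem_inter]
        constructor
        · rintro ⟨hxU, hxK⟩
          refine ⟨?_, hxK⟩
          by_contra hxV
          have hm : x ∈ symmDiff U V := Finset.mem_symmDiff.mpr (Or.inl ⟨hxU, hxV⟩)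
          rw [hd, Finset.mem_singleton] at hm
          exact hdK (hm ▸ hxK)
        · rintro ⟨hxV, hxK⟩
          refine ⟨?_, hxK⟩
          by_contra hxU
          have hm : x ∈ symmDiff U V := Finset.mem_symmDiff.mpr (Or.inr ⟨hxV, hxU⟩)
          rw [hd, Finset.mem_singleton] at hm
          exact hdK (hm ▸ hxK)
      refine ⟨s(U, V), ⟨hUV, d, hdK, ⟨U, ?_⟩⟩, ?_⟩
      · have hV' : symmDiff U {d} = V := by
          rw [← hd]
          exact symmDiff_symmDiff_cancel_left U V
        rw [hV']
      · simp only [Sym2.map_pair_eq, hU, hV]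
  choose Φ hΦmem hΦeq using hproj
  set Φ' : Sym2 ↥{W : Finset (Fin n) | W ⊆ K} → Sym2 (Finset (Fin n)) :=
    fun e' => if h : e' ∈ (projTree n K T).edgeSet then Φ e' h else s(∅, ∅) with hΦ'
  have hmaps : ∀ e' ∈ (projTree n K T).edgeSet, Φ' e' ∈ EK := by
    intro e' h
    rw [hΦ']
    simp only [dif_pos h]
    exact hΦmem e' h
  have hinj : Set.InjOn Φ' (projTree n K T).edgeSet := by
    intro x hx y hy hxy
    rw [hΦ'] at hxy
    simp only [dif_pos hx, dif_pos hy] at hxy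
    have h1 := hΦeq x hx
    have h2 := hΦeq y hy
    rw [hxy] at h1
    have h3 : Sym2.map Subtype.val x = Sym2.map Subtype.val y := by rw [← h1, ← h2]
    exact Sym2.map.injective Subtype.val_injective h3
  have hedge_le : (projTree n K T).edgeSet.ncard ≤ EK.ncard := by
    rw [← Set.ncard_image_of_injOn hinj]
    refine Set.ncard_le_ncard ?_ (Set.toFinite _)
    rintro e ⟨e', he', rfl⟩
    exact hmaps e' he'
  have hconn := projTree_connected K hTconn
  haveI : Fintype ↥{W : Finset (Fin n) | W ⊆ K} := Fintype.ofFinite _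
  have hv := connected_card_le hconn
  have hvc : Fintype.card ↥{W : Finset (Fin n) | W ⊆ K} = 2 ^ k := by
    rw [← Nat.card_eq_fintype_card, card_projVerts, hKcard]
  have hEKle : EK.ncard ≤ ∑ i ∈ K, dirCount T i := ncard_dir_union_le T K
  have hsum_eq : ∑ i ∈ K, dirCount T i = ∑ i ∈ K, a i :=
    Finset.sum_congr rfl fun i _ => hsig i
  rw [hvc] at hv
  rw [hsum_eq] at hEKle
  have hgoal : 2 ^ k ≤ (∑ i ∈ K, a i) + 1 := by
    calc 2 ^ k ≤ (projTree n K T).edgeSet.ncard + 1 := hv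
    _ ≤ EK.ncard + 1 := by omega
    _ ≤ (∑ i ∈ K, a i) + 1 := by omega
  omega

end Aux

/-- Theorem: characterisation of signatures.
An ordered `n`-tuple with entries in `[1, 2^{n-1}]` summing to `2^n - 1` is a signature
of `Q_n` iff all its partial sums satisfy `Σ_{j=1}^k a_j ≥ 2^k - 1`. -/
theorem stmt0 (n : ℕ) (hn : 1 ≤ n) (a : Fin n → ℕ)
    (hpos : ∀ i, 1 ≤ a i) (hmono : Monotone a) (hub : ∀ i, a i ≤ 2 ^ (n - 1))
    (hsum : ∑ i, a i = 2 ^ n - 1) :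
    IsSignature n a ↔
      ∀ k, 1 ≤ k → k ≤ n →
        2 ^ k - 1 ≤ ∑ i ∈ Finset.univ.filter (fun i : Fin n => (i : ℕ) < k), a i := by
  constructor
  · rintro ⟨T, hT, hsig⟩ k hk1 hkn
    exact forward_ineq hT hsig hk1 hkn
  · intro h
    obtain ⟨ψ, hψ, hc⟩ := exists_good_section hn (key_ineq hmono h) hsum
    exact isSignature_of_section ψ hψ hc
end

section
/- For every n ≥ 1, an n-tuple (a_1, ..., a_n) is the signature of a spanning tree of the n-cube Q_n if and only if it is the signature of a section of the set of nonempty subsets of [n]. -/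
open SimpleGraph

open Finset
open scoped Classical

section Graph

variable {V : Type*} [Fintype V] {G : SimpleGraph V}

lemma card_le_edges_of_connected (hG : G.Connected) :
    Fintype.card V - 1 ≤ G.edgeSet.ncard := by
  obtain ⟨v0⟩ := hG.nonempty
  choose p hp using fun w => (hG.exists_walk_length_eq_dist w v0)
  have hnotnil : ∀ w, w ≠ v0 → ¬ (p w).Nil := by
    intro w hw hnil
    rw [SimpleGraph.Walk.nil_iff_length_eq] at hnil
    rw [hp w] at hnil
    exact hw ((hG.dist_eq_zero_iff).mp hnil)
  set N : V → V := fun w => (p w).getVert 1 with hN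
  have hadj : ∀ w, w ≠ v0 → G.Adj w (N w) := by
    intro w hw
    exact SimpleGraph.Walk.adj_snd (hnotnil w hw)
  have hdist : ∀ w, w ≠ v0 → G.dist (N w) v0 < G.dist w v0 := by
    intro w hw
    have h1 : ((p w).tail).length + 1 = (p w).length :=
      SimpleGraph.Walk.length_tail_add_one (hnotnil w hw)
    have h2 : G.dist (N w) v0 ≤ ((p w).tail).length := SimpleGraph.dist_le _
    have h3 := hp w
    omega
  have hcard : (Finset.univ.erase v0).card = Fintype.card V - 1 := by
    simp [Finset.card_erase_of_mem]
  rw [← hcard, Set.ncard_eq_toFinset_card']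
  apply Finset.card_le_card_of_injOn (fun w => s(w, N w))
  · intro w hw
    simp only [Finset.coe_erase, Finset.coe_univ, Set.mem_diff, Set.mem_univ, true_and,
      Set.mem_singleton_iff] at hw
    simp only [Finset.mem_coe, Set.mem_toFinset]
    exact hadj w hw
  · intro a ha b hb hab
    simp only [Finset.coe_erase, Set.mem_diff, Finset.coe_univ, Set.mem_univ, true_and,
      Set.mem_singleton_iff] at ha hb
    rw [Sym2.eq_iff] at hab
    rcases hab with ⟨h1, -⟩ | ⟨h1, h2⟩
    · exact h1
    · exfalso
      have d1 := hdist a ha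
      have d2 := hdist b hb
      rw [← h1] at d2
      rw [h2] at d1
      omega

lemma connected_delete_of_reachable {v w : V} (hG : G.Connected)
    (h : (G \ fromEdgeSet {s(v, w)}).Reachable v w) :
    (G \ fromEdgeSet {s(v, w)}).Connected := by
  set G' := G \ fromEdgeSet {s(v, w)} with hG'
  have key : ∀ a b : V, G.Adj a b → G'.Reachable a b := by
    intro a b hab
    by_cases he : s(a, b) = s(v, w)
    · rw [Sym2.eq_iff] at he
      rcases he with ⟨rfl, rfl⟩ | ⟨rfl, rfl⟩
      · exact h
      · exact h.symm
    · refine SimpleGraph.Adj.reachable ?_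
      simp only [hG', SimpleGraph.sdiff_adj, SimpleGraph.fromEdgeSet_adj]
      exact ⟨hab, by intro hc; exact he hc.1⟩
  haveI := hG.nonempty
  refine SimpleGraph.Connected.mk ?_
  intro a b
  obtain ⟨p⟩ := hG.preconnected a b
  clear h
  induction p with
  | nil => rfl
  | cons hadj p ih => exact (key _ _ hadj).trans ih

lemma isTree_of_connected_ncard (hG : G.Connected)
    (hcard : G.edgeSet.ncard + 1 = Fintype.card V) : G.IsTree := by
  refine ⟨hG, ?_⟩
  rw [SimpleGraph.isAcyclic_iff_forall_adj_isBridge]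
  intro v w hvw
  rw [SimpleGraph.isBridge_iff]
  refine fun hreach => ?_
  set G' := G \ fromEdgeSet {s(v, w)} with hG'
  have hconn : G'.Connected := connected_delete_of_reachable hG hreach
  have hle := card_le_edges_of_connected hconn
  have hedge : G'.edgeSet = G.edgeSet \ {s(v, w)} := by
    rw [hG', SimpleGraph.edgeSet_sdiff, SimpleGraph.edgeSet_fromEdgeSet,
      SimpleGraph.edgeSet_sdiff_sdiff_isDiag]
  have h3 : G'.edgeSet.ncard = G.edgeSet.ncard - 1 := by
    rw [hedge]
    exact Set.ncard_diff_singleton_of_mem ((SimpleGraph.mem_edgeSet _).mpr hvw)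
  have hpos : 0 < G.edgeSet.ncard :=
    (Set.ncard_pos (Set.toFinite _)).mpr ⟨_, (SimpleGraph.mem_edgeSet _).mpr hvw⟩
  omega

end Graph

section Aux
variable {n : ℕ}

lemma symmDiff_of_sym2_eq {A B C D : Finset (Fin n)} (h : s(A,B) = s(C,D)) :
    symmDiff A B = symmDiff C D := by
  rw [Sym2.eq_iff] at h
  rcases h with ⟨rfl, rfl⟩ | ⟨rfl, rfl⟩
  · rfl
  · exact symmDiff_comm _ _

lemma edgeInDir_iff {i : Fin n} {A B : Finset (Fin n)} :
    edgeInDir i s(A,B) ↔ symmDiff A B = {i} := by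
  constructor
  · rintro ⟨Z, hZ⟩
    rw [symmDiff_of_sym2_eq hZ, symmDiff_symmDiff_cancel_left]
  · intro h
    exact ⟨A, by rw [← h, symmDiff_symmDiff_cancel_left]⟩

lemma symmDiff_erase {X : Finset (Fin n)} {i : Fin n} (h : i ∈ X) :
    symmDiff X (X.erase i) = {i} := by
  ext j
  simp only [Finset.mem_symmDiff, Finset.mem_erase, Finset.mem_singleton]
  constructor
  · rintro (⟨hj, hne⟩ | ⟨⟨hne, hj⟩, hn⟩)
    · by_contra hji; exact hne ⟨hji, hj⟩
    · exact absurd hj hn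
  · rintro rfl; exact Or.inl ⟨h, fun hc => hc.1 rfl⟩

section Reverse
variable {ψ : Finset (Fin n) → Fin n} (hψ : IsSection ψ)

/-- The edge set of the tree associated to a section. -/
def secEdgeSet (ψ : Finset (Fin n) → Fin n) : Set (Sym2 (Finset (Fin n))) :=
  (fun X => s(X, X.erase (ψ X))) '' {X | X.Nonempty}

include hψ

lemma sec_ne {X : Finset (Fin n)} (hX : X.Nonempty) : X ≠ X.erase (ψ X) := by
  intro hc
  have := Finset.card_erase_of_mem (hψ X hX)
  rw [← hc] at this
  have : 0 < X.card := Finset.card_pos.mpr hX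
  omega

lemma sec_injOn : Set.InjOn (fun X => s(X, X.erase (ψ X))) {X : Finset (Fin n) | X.Nonempty} := by
  intro X hX Y hY h
  simp only [Sym2.eq_iff] at h
  rcases h with ⟨h1, -⟩ | ⟨h1, h2⟩
  · exact h1
  · exfalso
    have c1 := Finset.card_erase_of_mem (hψ X hX)
    have c2 := Finset.card_erase_of_mem (hψ Y hY)
    have p1 : 0 < X.card := Finset.card_pos.mpr hX
    have p2 : 0 < Y.card := Finset.card_pos.mpr hY
    rw [h2] at c1
    rw [← h1] at c2
    omega

lemma secTree_edgeSet : (SimpleGraph.fromEdgeSet (secEdgeSet ψ)).edgeSet = secEdgeSet ψ := by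
  rw [SimpleGraph.edgeSet_fromEdgeSet]
  apply _root_.sdiff_eq_self_iff_disjoint.mpr
  rw [Set.disjoint_left]
  rintro e hd ⟨X, hX, rfl⟩
  simp only [Set.mem_setOf_eq, Sym2.isDiag_iff_proj_eq] at hd
  exact sec_ne hψ hX hd

lemma secTree_le : SimpleGraph.fromEdgeSet (secEdgeSet ψ) ≤ cube n := by
  intro A B hAB
  rw [SimpleGraph.fromEdgeSet_adj] at hAB
  obtain ⟨⟨X, hX, hXe⟩, hne⟩ := hAB
  show (symmDiff A B).card = 1
  rw [symmDiff_of_sym2_eq hXe.symm, symmDiff_erase (hψ X hX)]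
  simp

lemma secTree_adj_erase {X : Finset (Fin n)} (hX : X.Nonempty) :
    (SimpleGraph.fromEdgeSet (secEdgeSet ψ)).Adj X (X.erase (ψ X)) := by
  rw [SimpleGraph.fromEdgeSet_adj]
  exact ⟨⟨X, hX, rfl⟩, sec_ne hψ hX⟩

lemma secTree_connected_s1 : (SimpleGraph.fromEdgeSet (secEdgeSet ψ)).Connected := by
  have reach : ∀ (m : ℕ) (X : Finset (Fin n)), X.card ≤ m →
      (SimpleGraph.fromEdgeSet (secEdgeSet ψ)).Reachable X ∅ := by
    intro m
    induction m with
    | zero =>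
      intro X h
      rw [Nat.le_zero, Finset.card_eq_zero] at h
      rw [h]
    | succ m ih =>
      intro X h
      rcases eq_or_ne X ∅ with rfl | hne
      · rfl
      · have hX : X.Nonempty := Finset.nonempty_iff_ne_empty.mpr hne
        refine ((secTree_adj_erase hψ hX).reachable).trans (ih _ ?_)
        have := Finset.card_erase_of_mem (hψ X hX)
        have : 0 < X.card := Finset.card_pos.mpr hX
        omega
  refine SimpleGraph.Connected.mk ?_
  intro A B
  exact (reach A.card A le_rfl).trans (reach B.card B le_rfl).symm

lemma secTree_edgeSet_eq_image :
    (SimpleGraph.fromEdgeSet (secEdgeSet ψ)).edgeSet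
      = (fun X => s(X, X.erase (ψ X))) '' {X : Finset (Fin n) | X.Nonempty} :=
  secTree_edgeSet hψ

lemma nonempty_ncard : {X : Finset (Fin n) | X.Nonempty}.ncard = 2 ^ n - 1 := by
  have : {X : Finset (Fin n) | X.Nonempty} = ↑((Finset.univ : Finset (Finset (Fin n))).erase ∅) := by
    ext X
    simp [Finset.nonempty_iff_ne_empty]
  rw [this, Set.ncard_coe_finset, Finset.card_erase_of_mem (Finset.mem_univ _)]
  simp [Fintype.card_finset]

lemma secTree_ncard :
    (SimpleGraph.fromEdgeSet (secEdgeSet ψ)).edgeSet.ncard = 2 ^ n - 1 := by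
  rw [secTree_edgeSet hψ, secEdgeSet, Set.ncard_image_of_injOn (sec_injOn hψ), nonempty_ncard hψ]

lemma secTree_dirCount_s1 (i : Fin n) :
    dirCount (SimpleGraph.fromEdgeSet (secEdgeSet ψ)) i = secCount ψ i := by
  rw [dirCount, secCount]
  have hset : {e | e ∈ (SimpleGraph.fromEdgeSet (secEdgeSet ψ)).edgeSet ∧ edgeInDir i e}
      = (fun X => s(X, X.erase (ψ X))) '' {X : Finset (Fin n) | X.Nonempty ∧ ψ X = i} := by
    ext e
    constructor
    · rintro ⟨he, hdir⟩
      rw [secTree_edgeSet hψ] at he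
      obtain ⟨X, hX, rfl⟩ := he
      rw [edgeInDir_iff, symmDiff_erase (hψ X hX)] at hdir
      have : ψ X = i := by simpa using (Finset.singleton_injective hdir)
      exact ⟨X, ⟨hX, this⟩, rfl⟩
    · rintro ⟨X, ⟨hX, rfl⟩, rfl⟩
      refine ⟨?_, ?_⟩
      · rw [secTree_edgeSet hψ]; exact ⟨X, hX, rfl⟩
      · rw [edgeInDir_iff, symmDiff_erase (hψ X hX)]
  rw [hset, Set.ncard_image_of_injOn ((sec_injOn hψ).mono (by intro X hX; exact hX.1))]

lemma reverse_dir {a : Fin n → ℕ} (hsec : ∀ i, secCount ψ i = a i) : IsSignature n a := by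
  refine ⟨SimpleGraph.fromEdgeSet (secEdgeSet ψ), ⟨secTree_le hψ, ?_⟩, ?_⟩
  · refine isTree_of_connected_ncard (secTree_connected_s1 hψ) ?_
    rw [secTree_ncard hψ]
    have h1 : 1 ≤ 2 ^ n := Nat.one_le_two_pow
    simp [Fintype.card_finset]
    omega
  · intro i
    rw [secTree_dirCount_s1 hψ, hsec i]

end Reverse

section Forward
variable {T : SimpleGraph (Finset (Fin n))}

lemma edgeInDir_unique {i j : Fin n} {e : Sym2 (Finset (Fin n))}
    (hi : edgeInDir i e) (hj : edgeInDir j e) : i = j := by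
  induction e using Sym2.ind with
  | _ A B =>
    rw [edgeInDir_iff] at hi hj
    have : ({i} : Finset (Fin n)) = {j} := hi ▸ hj
    simpa using this

lemma dirCount_eq_card (T : SimpleGraph (Finset (Fin n))) (i : Fin n) :
    dirCount T i = (T.edgeFinset.filter (fun e => edgeInDir i e)).card := by
  rw [dirCount, ← Set.ncard_coe_finset]
  congr 1
  ext e
  simp [Set.mem_setOf_eq, SimpleGraph.mem_edgeFinset]

lemma sum_dirCount (T : SimpleGraph (Finset (Fin n))) (S : Finset (Fin n)) :
    ∑ i ∈ S, dirCount T i = (T.edgeFinset.filter (fun e => ∃ i ∈ S, edgeInDir i e)).card := by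
  have : (T.edgeFinset.filter (fun e => ∃ i ∈ S, edgeInDir i e))
      = S.biUnion (fun i => T.edgeFinset.filter (fun e => edgeInDir i e)) := by
    ext e; simp only [Finset.mem_filter, Finset.mem_biUnion]; tauto
  rw [this, Finset.card_biUnion]
  · exact Finset.sum_congr rfl fun i _ => (dirCount_eq_card T i)
  · intro i _ j _ hij
    simp only [Finset.disjoint_left, Finset.mem_filter]
    rintro e ⟨-, hi⟩ ⟨-, hj⟩
    exact hij (edgeInDir_unique hi hj)

lemma sum_dirCount_ncard (T : SimpleGraph (Finset (Fin n))) (S : Finset (Fin n)) :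
    ∑ i ∈ S, dirCount T i = {e | e ∈ T.edgeSet ∧ ∃ i ∈ S, edgeInDir i e}.ncard := by
  rw [sum_dirCount, ← Set.ncard_coe_finset]
  congr 1
  ext e
  simp [Set.mem_setOf_eq, SimpleGraph.mem_edgeFinset]

lemma cube_edge_dir {A B : Finset (Fin n)} (h : (cube n).Adj A B) :
    ∃ i, symmDiff A B = {i} := Finset.card_eq_one.mp h

lemma sum_dirCount_univ (hle : T ≤ cube n) :
    ∑ i, dirCount T i = T.edgeSet.ncard := by
  rw [sum_dirCount_ncard]
  congr 1
  ext e
  simp only [Set.mem_setOf_eq, Finset.mem_univ, true_and, and_iff_left_iff_imp]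
  induction e using Sym2.ind with
  | _ A B =>
    intro he
    obtain ⟨i, hi⟩ := cube_edge_dir (hle ((SimpleGraph.mem_edgeSet T).mp he))
    exact ⟨i, edgeInDir_iff.mpr hi⟩

lemma tree_ncard (hT : IsSpanningTreeOf T (cube n)) : T.edgeSet.ncard = 2 ^ n - 1 := by
  have h1 := hT.2.card_edgeFinset
  have hV : Fintype.card (Finset (Fin n)) = 2 ^ n := by simp [Fintype.card_finset]
  rw [Set.ncard_eq_toFinset_card']
  have h2 : (T.edgeSet.toFinset).card = T.edgeFinset.card := rfl
  omega

lemma proj_connected (hT : IsSpanningTreeOf T (cube n)) (S : Finset (Fin n)) :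
    (projTree n S T).Connected := by
  have hmem : ∀ U : Finset (Fin n), U ∩ S ∈ {W : Finset (Fin n) | W ⊆ S} := by
    intro U
    exact Finset.inter_subset_right
  have walkreach : ∀ (U V' : Finset (Fin n)), T.Walk U V' →
      (projTree n S T).Reachable ⟨U ∩ S, hmem U⟩ ⟨V' ∩ S, hmem V'⟩ := by
    intro U V' p
    induction p with
    | nil => rfl
    | @cons u v w hadj p ih =>
      rcases eq_or_ne (u ∩ S) (v ∩ S) with heq | hne
      · have : (⟨u ∩ S, hmem u⟩ : ↥{W : Finset (Fin n) | W ⊆ S}) = ⟨v ∩ S, hmem v⟩ :=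
          Subtype.ext heq
        rw [this]
        exact ih
      · refine (SimpleGraph.Adj.reachable ?_).trans ih
        exact ⟨hne, u, v, hadj, rfl, rfl⟩
  haveI : Nonempty ↥{W : Finset (Fin n) | W ⊆ S} := ⟨⟨∅, by simp⟩⟩
  refine SimpleGraph.Connected.mk ?_
  intro A B
  obtain ⟨p⟩ := hT.2.isConnected.preconnected A.1 B.1
  have h := walkreach A.1 B.1 p
  have hA : (⟨A.1 ∩ S, hmem A.1⟩ : ↥{W : Finset (Fin n) | W ⊆ S}) = A :=
    Subtype.ext (Finset.inter_eq_left.mpr A.2)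
  have hB : (⟨B.1 ∩ S, hmem B.1⟩ : ↥{W : Finset (Fin n) | W ⊆ S}) = B :=
    Subtype.ext (Finset.inter_eq_left.mpr B.2)
  rwa [hA, hB] at h

lemma proj_sum_ge (hT : IsSpanningTreeOf T (cube n)) (S : Finset (Fin n)) :
    2 ^ S.card - 1 ≤ ∑ i ∈ S, dirCount T i := by
  haveI F : Fintype ↥{W : Finset (Fin n) | W ⊆ S} := Fintype.ofFinite _
  have hcard : Fintype.card ↥{W : Finset (Fin n) | W ⊆ S} = 2 ^ S.card := by
    rw [← Nat.card_eq_fintype_card,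
      show {W : Finset (Fin n) | W ⊆ S} = (↑S.powerset : Set (Finset (Fin n))) from by
        ext W; simp [Finset.mem_powerset],
      Nat.card_coe_set_eq, Set.ncard_coe_finset, Finset.card_powerset]
  have hconn := proj_connected hT S
  have h1 := card_le_edges_of_connected hconn
  rw [hcard] at h1
  -- now bound projTree edge count by D_set
  set f : Sym2 (Finset (Fin n)) → Sym2 ↥{W : Finset (Fin n) | W ⊆ S} :=
    Sym2.map (fun U => ⟨U ∩ S, Finset.inter_subset_right⟩) with hf
  set D : Set (Sym2 (Finset (Fin n))) := {e | e ∈ T.edgeSet ∧ ∃ i ∈ S, edgeInDir i e} with hD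
  have hsub : (projTree n S T).edgeSet ⊆ f '' D := by
    intro e' he'
    induction e' using Sym2.ind with
    | _ A B =>
      rw [SimpleGraph.mem_edgeSet] at he'
      obtain ⟨hne, U, V, hUV, hU, hV⟩ := he'
      obtain ⟨i, hi⟩ := cube_edge_dir (hT.1 hUV)
      have hiS : i ∈ S := by
        by_contra hiS
        apply hne
        rw [← hU, ← hV]
        have h2 : symmDiff (U ∩ S) (V ∩ S) = (symmDiff U V) ∩ S := by
          rw [Finset.inter_comm U S, Finset.inter_comm V S, Finset.inter_comm _ S]
          exact (inf_symmDiff_distrib_left S U V).symm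
        have h3 : symmDiff (U ∩ S) (V ∩ S) = ∅ := by
          rw [h2, hi]
          simp [Finset.singleton_inter_of_notMem hiS]
        exact symmDiff_eq_bot.mp (h3.trans Finset.bot_eq_empty.symm)
      refine ⟨s(U, V), ⟨(SimpleGraph.mem_edgeSet T).mpr hUV, i, hiS, edgeInDir_iff.mpr hi⟩, ?_⟩
      rw [hf]
      simp only [Sym2.map_pair_eq]
      have eA : (⟨U ∩ S, Finset.inter_subset_right⟩ : ↥{W : Finset (Fin n) | W ⊆ S}) = A :=
        Subtype.ext hU
      have eB : (⟨V ∩ S, Finset.inter_subset_right⟩ : ↥{W : Finset (Fin n) | W ⊆ S}) = B :=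
        Subtype.ext hV
      rw [eA, eB]
  have h2 : (projTree n S T).edgeSet.ncard ≤ D.ncard := by
    calc (projTree n S T).edgeSet.ncard ≤ (f '' D).ncard :=
          Set.ncard_le_ncard hsub (Set.toFinite _)
    _ ≤ D.ncard := Set.ncard_image_le (Set.toFinite _)
  rw [sum_dirCount_ncard, ← hD]
  omega

lemma forward_dir (hn : 1 ≤ n) {a : Fin n → ℕ} (hT : IsSpanningTreeOf T (cube n))
    (ha : HasSig T a) :
    ∃ ψ : Finset (Fin n) → Fin n, IsSection ψ ∧ ∀ i, secCount ψ i = a i := by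
  have htotal : ∑ i, a i = 2 ^ n - 1 := by
    have h1 : ∑ i, dirCount T i = T.edgeSet.ncard := sum_dirCount_univ hT.1
    have h2 := tree_ncard hT
    rw [← Finset.sum_congr rfl (fun i _ => ha i), h1, h2]
  have hlow : ∀ S : Finset (Fin n), 2 ^ S.card - 1 ≤ ∑ i ∈ S, a i := by
    intro S
    have := proj_sum_ge hT S
    rwa [Finset.sum_congr rfl (fun i _ => ha i)] at this
  set t : {X : Finset (Fin n) // X.Nonempty} → Finset (Fin n × ℕ) :=
    fun X => X.1.biUnion (fun i => (Finset.range (a i)).image (fun k => (i, k))) with ht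
  have hall : ∀ s : Finset {X : Finset (Fin n) // X.Nonempty}, s.card ≤ (s.biUnion t).card := by
    intro s
    set U : Finset (Fin n) := s.biUnion (fun X => X.1) with hU
    have h1 : s.biUnion t = U.biUnion (fun i => (Finset.range (a i)).image (fun k => (i, k))) := by
      ext p
      simp only [ht, hU, Finset.mem_biUnion, Finset.mem_image, Finset.mem_range]
      tauto
    have h2 : (U.biUnion fun i => (Finset.range (a i)).image (fun k => (i, k))).card
        = ∑ i ∈ U, a i := by
      rw [Finset.card_biUnion]
      · refine Finset.sum_congr rfl fun i _ => ?_
        rw [Finset.card_image_of_injective _ (fun k1 k2 h => (Prod.mk.injEq i k1 i k2 ▸ h).2)]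
        exact Finset.card_range _
      · intro i _ j _ hij
        simp only [Finset.disjoint_left, Finset.mem_image, Finset.mem_range]
        rintro p ⟨k, -, rfl⟩ ⟨k', -, hk'⟩
        exact hij ((Prod.mk.injEq _ _ _ _ ▸ hk').1.symm)
    have h3 : s.card ≤ 2 ^ U.card - 1 := by
      have hc : (U.powerset.erase ∅).card = 2 ^ U.card - 1 := by
        rw [Finset.card_erase_of_mem (Finset.empty_mem_powerset U), Finset.card_powerset]
      rw [← hc]
      apply Finset.card_le_card_of_injOn (fun X => X.1)
      · intro X hX
        rw [Finset.mem_coe, Finset.mem_erase, Finset.mem_powerset]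
        exact ⟨Finset.nonempty_iff_ne_empty.mp X.2, Finset.subset_biUnion_of_mem _ hX⟩
      · intro X _ Y _ h
        exact Subtype.ext h
    calc s.card ≤ 2 ^ U.card - 1 := h3
      _ ≤ ∑ i ∈ U, a i := hlow U
      _ = (s.biUnion t).card := by rw [h1, h2]
  obtain ⟨f, finj, hft⟩ := (Finset.all_card_le_biUnion_card_iff_exists_injective t).mp hall
  haveI : Nonempty (Fin n) := ⟨⟨0, hn⟩⟩
  set ψ : Finset (Fin n) → Fin n :=
    fun X => if h : X.Nonempty then (f ⟨X, h⟩).1 else Classical.arbitrary _ with hψdef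
  have hmemt : ∀ (X : Finset (Fin n)) (h : X.Nonempty),
      (f ⟨X, h⟩).1 ∈ X ∧ (f ⟨X, h⟩).2 < a (f ⟨X, h⟩).1 := by
    intro X h
    have := hft ⟨X, h⟩
    rw [ht] at this
    simp only [Finset.mem_biUnion, Finset.mem_image, Finset.mem_range] at this
    obtain ⟨i, hi, k, hk, hp⟩ := this
    rw [← hp]
    exact ⟨hi, hk⟩
  have hsec : IsSection ψ := by
    intro X hX
    rw [hψdef]
    simp only [dif_pos hX]
    exact (hmemt X hX).1
  refine ⟨ψ, hsec, ?_⟩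
  have hψval : ∀ (X : Finset (Fin n)) (h : X.Nonempty), ψ X = (f ⟨X, h⟩).1 := by
    intro X h
    rw [hψdef]
    simp only [dif_pos h]
  have hbcard : ∀ i, secCount ψ i
      = (Finset.univ.filter (fun X : Finset (Fin n) => X.Nonempty ∧ ψ X = i)).card := by
    intro i
    rw [secCount, ← Set.ncard_coe_finset]
    congr 1
    ext X
    simp
  have hble : ∀ i, secCount ψ i ≤ a i := by
    intro i
    rw [hbcard i, ← Finset.card_range (a i)]
    apply Finset.card_le_card_of_injOn
      (fun X => if h : X.Nonempty then (f ⟨X, h⟩).2 else 0)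
    · intro X hX
      rw [Finset.mem_coe, Finset.mem_filter] at hX
      obtain ⟨-, hXne, hψX⟩ := hX
      simp only [dif_pos hXne, Finset.mem_coe, Finset.mem_range]
      have := (hmemt X hXne).2
      rwa [← hψval X hXne, hψX] at this
    · intro X hX Y hY h
      simp only [Finset.coe_filter, Set.mem_setOf_eq] at hX hY
      obtain ⟨-, hXne, hψX⟩ := hX
      obtain ⟨-, hYne, hψY⟩ := hY
      simp only [dif_pos hXne, dif_pos hYne] at h
      have h1 : f ⟨X, hXne⟩ = f ⟨Y, hYne⟩ := by
        have e1 : (f ⟨X, hXne⟩).1 = i := by rw [← hψval X hXne, hψX]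
        have e2 : (f ⟨Y, hYne⟩).1 = i := by rw [← hψval Y hYne, hψY]
        exact Prod.ext (e1.trans e2.symm) h
      have := finj h1
      exact congrArg Subtype.val this
  have hbsum : ∑ i, secCount ψ i = 2 ^ n - 1 := by
    have hfib := Finset.card_eq_sum_card_fiberwise
      (f := ψ) (s := Finset.univ.filter (fun X : Finset (Fin n) => X.Nonempty))
      (t := Finset.univ) (fun X _ => Finset.mem_univ (ψ X))
    have hcount : (Finset.univ.filter (fun X : Finset (Fin n) => X.Nonempty)).card
        = 2 ^ n - 1 := by
      rw [show (Finset.univ.filter (fun X : Finset (Fin n) => X.Nonempty))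
          = Finset.univ.erase ∅ from by ext X; simp [Finset.nonempty_iff_ne_empty],
        Finset.card_erase_of_mem (Finset.mem_univ _)]
      simp [Fintype.card_finset]
    rw [← hcount, hfib]
    refine Finset.sum_congr rfl fun i _ => ?_
    rw [hbcard i, Finset.filter_filter]
  have : ∀ i, secCount ψ i = a i := by
    by_contra hc
    push_neg at hc
    obtain ⟨j, hj⟩ := hc
    have hjlt : secCount ψ j < a j := lt_of_le_of_ne (hble j) hj
    have : ∑ i, secCount ψ i < ∑ i, a i :=
      Finset.sum_lt_sum (fun i _ => hble i) ⟨j, Finset.mem_univ j, hjlt⟩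
    omega
  exact this

end Forward
end Aux

/-- Lemma: signatures of trees are signatures of sections.
An `n`-tuple is the signature of a spanning tree of `Q_n` iff it is the signature of a
section of the set of nonempty subsets of `[n]`. -/
theorem stmt1 (n : ℕ) (hn : 1 ≤ n) (a : Fin n → ℕ) :
    IsSignature n a ↔
      ∃ ψ : Finset (Fin n) → Fin n, IsSection ψ ∧ ∀ i, secCount ψ i = a i := by
  constructor
  · rintro ⟨T, hT, ha⟩
    exact forward_dir hn hT ha
  · rintro ⟨ψ, hsec, hcount⟩
    exact reverse_dir hsec hcount
end

section
/- Let S = (a_1, ..., a_n) be an ordered signature of Q_n, i.e. a signature with a_1 ≤ a_2 ≤ ... ≤ a_n. Then a_i ≥ i for all i ∈ [n]. -/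
open SimpleGraph

section Aux

lemma aux_pow (i : ℕ) : (i + 1) * i + 2 ≤ 2 ^ (i + 1) := by
  induction i with
  | zero => simp
  | succ k ih =>
    have hk : k ≤ k * k := by
      cases k with
      | zero => simp
      | succ m => exact Nat.le_mul_of_pos_left _ (Nat.succ_pos m)
    rw [pow_succ]; nlinarith [ih, hk]

lemma aux_conn {V : Type*} [Finite V] (G : SimpleGraph V) (hG : G.Preconnected) (r : V) :
    Nat.card V ≤ G.edgeSet.ncard + 1 := by
  classical
  have hstep : ∀ v : V, v ≠ r → ∃ w, G.Adj v w ∧ G.dist w r < G.dist v r := by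
    intro v hv
    obtain ⟨p, hp⟩ := (hG v r).exists_walk_length_eq_dist
    cases p with
    | nil => exact absurd rfl hv
    | cons h q =>
      refine ⟨_, h, ?_⟩
      have h1 : G.dist _ r ≤ q.length := SimpleGraph.dist_le q
      simp only [SimpleGraph.Walk.length_cons] at hp
      omega
  choose f hf1 hf2 using hstep
  set g : V → Sym2 V := fun v => if h : v = r then s(r, r) else s(v, f v h) with hg
  have hinj : Set.InjOn g {v | v ≠ r} := by
    intro u hu v hv huv
    simp only [Set.mem_setOf_eq] at hu hv
    rw [hg] at huv
    simp only [dif_neg hu, dif_neg hv, Sym2.eq_iff] at huv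
    rcases huv with ⟨h1, h2⟩ | ⟨h1, h2⟩
    · exact h1
    · exfalso
      have ha := hf2 u hu
      have hb := hf2 v hv
      rw [h2] at ha
      rw [← h1] at hb
      omega
  have himg : g '' {v | v ≠ r} ⊆ G.edgeSet := by
    rintro e ⟨v, hv, rfl⟩
    simp only [Set.mem_setOf_eq] at hv
    rw [hg]
    simp only [dif_neg hv]
    exact (hf1 v hv)
  have h1 : ({v : V | v ≠ r}).ncard ≤ G.edgeSet.ncard := by
    rw [← Set.ncard_image_of_injOn hinj]
    exact Set.ncard_le_ncard himg (Set.toFinite _)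
  have h2 : Nat.card V = ({v : V | v ≠ r}).ncard + 1 := by
    have hu : ({v : V | v ≠ r} ∪ {r}) = Set.univ := by
      ext v; by_cases hv : v = r <;> simp [hv]
    have hd : Disjoint {v : V | v ≠ r} ({r} : Set V) := by
      rw [Set.disjoint_singleton_right]; simp
    rw [← Set.ncard_univ, ← hu, Set.ncard_union_eq hd (Set.toFinite _) (Set.toFinite _),
      Set.ncard_singleton]
  omega

lemma aux_key (n : ℕ) (T : SimpleGraph (Finset (Fin n))) (hT : IsSpanningTreeOf T (cube n))
    (K : Finset (Fin n)) : 2 ^ K.card ≤ (∑ i ∈ K, dirCount T i) + 1 := by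
  classical
  obtain ⟨hle, htree⟩ := hT
  set S : Set (Sym2 (Finset (Fin n))) := {e | e ∈ T.edgeSet ∧ ∃ i ∈ K, edgeInDir i e} with hS
  set P := SimpleGraph.fromEdgeSet (Sym2.map (· ∩ K) '' S) with hP
  -- adjacency transfer
  have hadj : ∀ X Y : Finset (Fin n), T.Adj X Y → X ∩ K = Y ∩ K ∨ P.Adj (X ∩ K) (Y ∩ K) := by
    intro X Y hXY
    have hc : (symmDiff X Y).card = 1 := hle hXY
    obtain ⟨d, hd⟩ := Finset.card_eq_one.mp hc
    have hY : Y = symmDiff X {d} := by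
      rw [← hd, symmDiff_symmDiff_cancel_left]
    by_cases hdK : d ∈ K
    · right
      have heS : s(X, Y) ∈ S := by
        refine ⟨(SimpleGraph.mem_edgeSet ..).mpr hXY, d, hdK, X, ?_⟩
        rw [hY]
      have hne : X ∩ K ≠ Y ∩ K := by
        intro h
        have hdX : d ∈ symmDiff X Y := by rw [hd]; exact Finset.mem_singleton_self d
        rw [Finset.mem_symmDiff] at hdX
        have : d ∈ X ∩ K ↔ d ∈ Y ∩ K := by rw [h]
        simp only [Finset.mem_inter, hdK, and_true] at this
        tauto
      rw [hP, SimpleGraph.fromEdgeSet_adj]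
      exact ⟨⟨s(X, Y), heS, by simp [Sym2.map_pair_eq]⟩, hne⟩
    · left
      ext a
      simp only [Finset.mem_inter]
      constructor
      · rintro ⟨haX, haK⟩
        refine ⟨?_, haK⟩
        have hane : a ≠ d := fun h => hdK (h ▸ haK)
        have : a ∉ symmDiff X Y := by rw [hd]; simp [hane]
        rw [Finset.mem_symmDiff] at this
        tauto
      · rintro ⟨haY, haK⟩
        refine ⟨?_, haK⟩
        have hane : a ≠ d := fun h => hdK (h ▸ haK)
        have : a ∉ symmDiff X Y := by rw [hd]; simp [hane]
        rw [Finset.mem_symmDiff] at this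
        tauto
  have hwalk : ∀ (X Y : Finset (Fin n)), T.Walk X Y → P.Reachable (X ∩ K) (Y ∩ K) := by
    intro X Y w
    induction w with
    | nil => exact SimpleGraph.Reachable.refl _
    | cons h p ih =>
      rcases hadj _ _ h with heq | hadj'
      · rw [heq]; exact ih
      · exact hadj'.reachable.trans ih
  have hreach : ∀ X Y : Finset (Fin n), P.Reachable (X ∩ K) (Y ∩ K) := by
    intro X Y
    obtain ⟨w⟩ := htree.isConnected.preconnected X Y
    exact hwalk X Y w
  have hends : ∀ u v : Finset (Fin n), P.Adj u v → u ⊆ K ∧ v ⊆ K := by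
    intro u v huv
    rw [hP, SimpleGraph.fromEdgeSet_adj] at huv
    obtain ⟨⟨e, _, he⟩, _⟩ := huv
    induction e with
    | _ X Y =>
      rw [Sym2.map_pair_eq, Sym2.eq_iff] at he
      rcases he with ⟨h1, h2⟩ | ⟨h1, h2⟩ <;> subst h1 <;> subst h2 <;>
        exact ⟨Finset.inter_subset_right, Finset.inter_subset_right⟩
  set s : Set (Finset (Fin n)) := {W : Finset (Fin n) | W ⊆ K} with hs
  set Q := P.induce s with hQ
  have hlift : ∀ (u v : Finset (Fin n)) (w : P.Walk u v) (hu : u ∈ s) (hv : v ∈ s),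
      Q.Reachable ⟨u, hu⟩ ⟨v, hv⟩ := by
    intro u v w
    induction w with
    | nil =>
      intro hu hv
      exact SimpleGraph.Reachable.refl _
    | @cons a b c h p ih =>
      intro hu hv
      have hmid : b ∈ s := (hends _ _ h).2
      have hQadj : Q.Adj ⟨a, hu⟩ ⟨b, hmid⟩ := h
      exact hQadj.reachable.trans (ih hmid hv)
  have hQconn : Q.Preconnected := by
    rintro ⟨A, hA⟩ ⟨B, hB⟩
    have hr := hreach A B
    rw [Finset.inter_eq_left.mpr hA, Finset.inter_eq_left.mpr hB] at hr
    obtain ⟨w⟩ := hr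
    exact hlift A B w hA hB
  -- vertex count
  have hvcard : Nat.card s = 2 ^ K.card := by
    have : s = (K.powerset : Finset (Finset (Fin n))) := by
      ext W; simp [hs, Finset.mem_powerset]
    rw [Nat.card_coe_set_eq, this, Set.ncard_coe_finset, Finset.card_powerset]
  have hconn := aux_conn Q hQconn ⟨∅, by simp [hs]⟩
  -- edge counts
  have he1 : Q.edgeSet.ncard ≤ P.edgeSet.ncard := by
    have hinj : Function.Injective (Sym2.map (Subtype.val : s → Finset (Fin n))) :=
      Sym2.map.injective Subtype.val_injective
    have hsub : Sym2.map (Subtype.val : s → Finset (Fin n)) '' Q.edgeSet ⊆ P.edgeSet := by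
      rintro e ⟨e', he', rfl⟩
      induction e' with
      | _ a b =>
        rw [SimpleGraph.mem_edgeSet] at he'
        rw [Sym2.map_pair_eq, SimpleGraph.mem_edgeSet]
        exact he'
    rw [← Set.ncard_image_of_injective Q.edgeSet hinj]
    exact Set.ncard_le_ncard hsub (Set.toFinite _)
  have he2 : P.edgeSet.ncard ≤ S.ncard := by
    have hsub : P.edgeSet ⊆ Sym2.map (· ∩ K) '' S := by
      rw [hP, SimpleGraph.edgeSet_fromEdgeSet]
      exact Set.diff_subset
    exact le_trans (Set.ncard_le_ncard hsub (Set.toFinite _)) (Set.ncard_image_le (Set.toFinite _))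
  have he3 : ∀ J : Finset (Fin n),
      {e | e ∈ T.edgeSet ∧ ∃ i ∈ J, edgeInDir i e}.ncard ≤ ∑ i ∈ J, dirCount T i := by
    intro J
    induction J using Finset.induction with
    | empty => simp
    | @insert j J hj ih =>
      have hsub : {e | e ∈ T.edgeSet ∧ ∃ i ∈ insert j J, edgeInDir i e} ⊆
          {e | e ∈ T.edgeSet ∧ edgeInDir j e} ∪ {e | e ∈ T.edgeSet ∧ ∃ i ∈ J, edgeInDir i e} := by
        rintro e ⟨he, i, hi, hd⟩
        rcases Finset.mem_insert.mp hi with rfl | hiJ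
        · exact Or.inl ⟨he, hd⟩
        · exact Or.inr ⟨he, i, hiJ, hd⟩
      calc {e | e ∈ T.edgeSet ∧ ∃ i ∈ insert j J, edgeInDir i e}.ncard
          ≤ ({e | e ∈ T.edgeSet ∧ edgeInDir j e} ∪
              {e | e ∈ T.edgeSet ∧ ∃ i ∈ J, edgeInDir i e}).ncard :=
            Set.ncard_le_ncard hsub (Set.toFinite _)
        _ ≤ {e | e ∈ T.edgeSet ∧ edgeInDir j e}.ncard +
              {e | e ∈ T.edgeSet ∧ ∃ i ∈ J, edgeInDir i e}.ncard := Set.ncard_union_le _ _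
        _ ≤ dirCount T j + ∑ i ∈ J, dirCount T i := by
            rw [dirCount]
            exact Nat.add_le_add_left ih _
        _ = ∑ i ∈ insert j J, dirCount T i := (Finset.sum_insert hj).symm
  have hfinal : S.ncard ≤ ∑ i ∈ K, dirCount T i := he3 K
  calc 2 ^ K.card = Nat.card s := hvcard.symm
    _ ≤ Q.edgeSet.ncard + 1 := hconn
    _ ≤ S.ncard + 1 := by omega
    _ ≤ (∑ i ∈ K, dirCount T i) + 1 := by omega

end Aux

/-- Lemma: signature growth. For an ordered signature `a` of `Q_n` we
have `a_i ≥ i` for all `i` (here index `i : Fin n` corresponds to the paper's `i+1`). -/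


theorem stmt2 (n : ℕ) (a : Fin n → ℕ) (hsig : IsSignature n a) (hmono : Monotone a) :
    ∀ i : Fin n, (i : ℕ) + 1 ≤ a i := by
  classical
  obtain ⟨T, hT, hsig'⟩ := hsig
  intro i
  set K : Finset (Fin n) := Finset.Iic i with hK
  have hKcard : K.card = (i : ℕ) + 1 := by rw [hK, Fin.card_Iic]
  have h1 := aux_key n T hT K
  rw [hKcard] at h1
  have hsum : ∑ j ∈ K, dirCount T j = ∑ j ∈ K, a j :=
    Finset.sum_congr rfl fun j _ => hsig' j
  have h2 : ∑ j ∈ K, a j ≤ ((i : ℕ) + 1) * a i := by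
    calc ∑ j ∈ K, a j ≤ ∑ _j ∈ K, a i :=
          Finset.sum_le_sum fun j hj => hmono (Finset.mem_Iic.mp hj)
      _ = K.card * a i := by rw [Finset.sum_const, smul_eq_mul]
      _ = ((i : ℕ) + 1) * a i := by rw [hKcard]
  have h3 := aux_pow (i : ℕ)
  by_contra hcon
  push_neg at hcon
  have h4 : ((i : ℕ) + 1) * a i ≤ ((i : ℕ) + 1) * (i : ℕ) :=
    Nat.mul_le_mul_left _ (by omega)
  have := h1.trans (by omega : (∑ j ∈ K, dirCount T j) + 1 ≤ ((i : ℕ) + 1) * a i + 1)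
  nlinarith
end
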